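/- Under the unique-optimum assumption, the stability measures have the closed forms ζ_p = min_{1≤j≤n−m} s*_{m+j}/√(‖(B⁻¹N)_{·,j}‖² + 1) and ζ_d = min_{1≤i≤m} x*_i/√(‖(B⁻¹N)_{i,·}‖² + 1). -/

import Mathlib

open Matrix
open scoped BigOperators

noncomputable section

namespace LPPaper

/-- Euclidean norm of a finite real vector. -/
def enorm {k : ℕ} (v : Fin k → ℝ) : ℝ := Real.sqrt (∑ i, (v i) ^ 2)

/-- ℓ₁ norm of a finite real vector. -/
def l1 {k : ℕ} (v : Fin k → ℝ) : ℝ := ∑ i, |v i|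

/-- Spectral norm (operator 2-norm w.r.t. Euclidean norms) of a real matrix. -/
def specNorm {α β : Type*} [Fintype α] [Fintype β] [DecidableEq β] (M : Matrix α β ℝ) : ℝ :=
  ‖LinearMap.toContinuousLinearMap (Matrix.toEuclideanLin M)‖

variable {m n : ℕ}

/-- Embedding of basic indices (the first `m` coordinates). -/
def bIdx (hmn : m ≤ n) (i : Fin m) : Fin n := Fin.castLE hmn i

/-- Embedding of nonbasic indices (the last `n - m` coordinates). -/
def nIdx (hmn : m ≤ n) (j : Fin (n - m)) : Fin n := ⟨m + j.val, by have := j.isLt; omega⟩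

/-- The basis matrix `B`: the first `m` columns of `A`. -/
def Bmat (hmn : m ≤ n) (A : Matrix (Fin m) (Fin n) ℝ) : Matrix (Fin m) (Fin m) ℝ :=
  Matrix.of fun i j => A i (bIdx hmn j)

/-- The nonbasic matrix `N`: the last `n - m` columns of `A`. -/
def Nmat (hmn : m ≤ n) (A : Matrix (Fin m) (Fin n) ℝ) : Matrix (Fin m) (Fin (n - m)) ℝ :=
  Matrix.of fun i j => A i (nIdx hmn j)

/-- The simplex tableau `B⁻¹N` at the optimal basis. -/
def BN (hmn : m ≤ n) (A : Matrix (Fin m) (Fin n) ℝ) : Matrix (Fin m) (Fin (n - m)) ℝ :=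
  (Bmat hmn A)⁻¹ * Nmat hmn A

/-- `q := Aᵀ(AAᵀ)⁻¹ b`. -/
def qvec (A : Matrix (Fin m) (Fin n) ℝ) (b : Fin m → ℝ) : Fin n → ℝ :=
  Aᵀ *ᵥ ((A * Aᵀ)⁻¹ *ᵥ b)

/-- Primal feasibility: `Ax = b`, `x ≥ 0`. -/
def PrimalFeasible (A : Matrix (Fin m) (Fin n) ℝ) (b : Fin m → ℝ) (x : Fin n → ℝ) : Prop :=
  A *ᵥ x = b ∧ ∀ i, 0 ≤ x i

/-- Dual feasibility: `Aᵀy + s = c`, `s ≥ 0`. -/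
def DualFeasible (A : Matrix (Fin m) (Fin n) ℝ) (c : Fin n → ℝ) (y : Fin m → ℝ)
    (s : Fin n → ℝ) : Prop :=
  Aᵀ *ᵥ y + s = c ∧ ∀ i, 0 ≤ s i

/-- The unique-optimum assumption (Assumption 1 of the paper), with the optimal basis being
(after a permutation of the variables) the set of the first `m` indices: the rows of `A` are
linearly independent, `x*` is the unique primal optimal solution, `(y*, s*)` the unique dual
optimal solution, the basis matrix `B` is invertible, `x*ᵢ > 0` exactly for the first `m`
indices and `s*ᵢ > 0` exactly for the remaining indices. -/
structure UniqueOpt (hmn : m ≤ n) (A : Matrix (Fin m) (Fin n) ℝ) (b : Fin m → ℝ)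
    (c : Fin n → ℝ) (xstar : Fin n → ℝ) (ystar : Fin m → ℝ) (sstar : Fin n → ℝ) : Prop where
  rows_indep : LinearIndependent ℝ (fun i => A i)
  primal_feas : PrimalFeasible A b xstar
  primal_opt : ∀ x, PrimalFeasible A b x → c ⬝ᵥ xstar ≤ c ⬝ᵥ x
  primal_uniq : ∀ x, PrimalFeasible A b x → c ⬝ᵥ x = c ⬝ᵥ xstar → x = xstar
  dual_feas : DualFeasible A c ystar sstar
  dual_opt : ∀ y s, DualFeasible A c y s → b ⬝ᵥ y ≤ b ⬝ᵥ ystar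
  dual_uniq : ∀ y s, DualFeasible A c y s → b ⬝ᵥ y = b ⬝ᵥ ystar → y = ystar ∧ s = sstar
  basis_isUnit : IsUnit (Bmat hmn A).det
  xstar_supp : ∀ i : Fin n, 0 < xstar i ↔ (i : ℕ) < m
  sstar_supp : ∀ i : Fin n, 0 < sstar i ↔ m ≤ (i : ℕ)

/-- The `max` factor appearing in the geometric condition number `Φ`. -/
def PhiFactor (hmn : m ≤ n) (A : Matrix (Fin m) (Fin n) ℝ) (xstar sstar : Fin n → ℝ) : ℝ :=
  max (⨆ j : Fin (n - m),
        Real.sqrt ((∑ i, (BN hmn A i j) ^ 2) + 1) / sstar (nIdx hmn j))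
      (⨆ i : Fin m,
        Real.sqrt ((∑ j, (BN hmn A i j) ^ 2) + 1) / xstar (bIdx hmn i))

/-- The geometric condition number `Φ`. -/
def Phi (hmn : m ≤ n) (A : Matrix (Fin m) (Fin n) ℝ) (xstar sstar : Fin n → ℝ) : ℝ :=
  (l1 xstar + l1 sstar) * PhiFactor hmn A xstar sstar


/-- The first `m` indices form the unique optimal basis of the LP `(A, b, c)`:
there are (unique, nondegenerate) primal and dual optimal solutions whose supports are
exactly the first `m` indices and its complement, respectively. -/
def UniqueOptBasis (hmn : m ≤ n) (A : Matrix (Fin m) (Fin n) ℝ) (b : Fin m → ℝ)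
    (c : Fin n → ℝ) : Prop :=
  ∃ x y s, UniqueOpt hmn A b c x y s

/-- Stability of the optimal basis under perturbations of the cost vector `c`. -/
def zetaP (hmn : m ≤ n) (A : Matrix (Fin m) (Fin n) ℝ) (b : Fin m → ℝ) (c : Fin n → ℝ) : ℝ :=
  sInf {t | ∃ dc : Fin n → ℝ, t = enorm dc ∧ ¬ UniqueOptBasis hmn A b (c + dc)}

/-- Stability of the optimal basis under perturbations of the right-hand side `b`,
measured in the `(AAᵀ)⁻¹`-norm. -/
def zetaD (hmn : m ≤ n) (A : Matrix (Fin m) (Fin n) ℝ) (b : Fin m → ℝ) (c : Fin n → ℝ) : ℝ :=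
  sInf {t | ∃ db : Fin m → ℝ, t = Real.sqrt (db ⬝ᵥ ((A * Aᵀ)⁻¹ *ᵥ db)) ∧
    ¬ UniqueOptBasis hmn A (b + db) c}

/-! ### auxiliary infrastructure -/

def splitEquiv (hmn : m ≤ n) : Fin m ⊕ Fin (n - m) ≃ Fin n :=
  finSumFinEquiv.trans (finCongr (by omega))

lemma splitEquiv_inl (hmn : m ≤ n) (i : Fin m) : splitEquiv hmn (Sum.inl i) = bIdx hmn i := by
  apply Fin.ext; simp [splitEquiv, bIdx]

lemma splitEquiv_inr (hmn : m ≤ n) (j : Fin (n - m)) : splitEquiv hmn (Sum.inr j) = nIdx hmn j := by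
  apply Fin.ext; simp [splitEquiv, nIdx]

lemma sum_split (hmn : m ≤ n) (f : Fin n → ℝ) :
    ∑ i, f i = (∑ i : Fin m, f (bIdx hmn i)) + ∑ j : Fin (n - m), f (nIdx hmn j) := by
  rw [← Fintype.sum_equiv (splitEquiv hmn) (fun x => f (splitEquiv hmn x)) f (fun _ => rfl),
    Fintype.sum_sum_type]
  simp [splitEquiv_inl, splitEquiv_inr]

lemma nIdx_inj (hmn : m ≤ n) {j j' : Fin (n-m)} (h : nIdx hmn j = nIdx hmn j') : j = j' := by
  apply Fin.ext
  have := congrArg Fin.val h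
  simpa [nIdx] using this

lemma bIdx_lt (hmn : m ≤ n) (i : Fin m) : ((bIdx hmn i : Fin n) : ℕ) < m := i.isLt
lemma nIdx_ge (hmn : m ≤ n) (j : Fin (n-m)) : m ≤ ((nIdx hmn j : Fin n) : ℕ) := Nat.le_add_right _ _

lemma idx_cases (hmn : m ≤ n) (i : Fin n) :
    (∃ i' : Fin m, i = bIdx hmn i') ∨ (∃ j : Fin (n-m), i = nIdx hmn j) := by
  by_cases h : (i:ℕ) < m
  · exact Or.inl ⟨⟨i, h⟩, Fin.ext rfl⟩
  · refine Or.inr ⟨⟨(i:ℕ) - m, by omega⟩, Fin.ext ?_⟩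
    show (i:ℕ) = m + ((i:ℕ) - m); omega

def rB (hmn : m ≤ n) (v : Fin n → ℝ) : Fin m → ℝ := fun i => v (bIdx hmn i)
def rN (hmn : m ≤ n) (v : Fin n → ℝ) : Fin (n - m) → ℝ := fun j => v (nIdx hmn j)

lemma dot_split (hmn : m ≤ n) (u v : Fin n → ℝ) :
    u ⬝ᵥ v = rB hmn u ⬝ᵥ rB hmn v + rN hmn u ⬝ᵥ rN hmn v :=
  sum_split hmn _

lemma mulVec_split (hmn : m ≤ n) (A : Matrix (Fin m) (Fin n) ℝ) (x : Fin n → ℝ) :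
    A *ᵥ x = Bmat hmn A *ᵥ rB hmn x + Nmat hmn A *ᵥ rN hmn x := by
  funext i
  show (A i) ⬝ᵥ x = _
  rw [dot_split hmn (A i) x]; rfl

lemma tdot {k l : ℕ} (M : Matrix (Fin k) (Fin l) ℝ) (y : Fin k → ℝ) (x : Fin l → ℝ) :
    (Mᵀ *ᵥ y) ⬝ᵥ x = y ⬝ᵥ (M *ᵥ x) := by
  rw [mulVec_transpose, dotProduct_mulVec]

lemma tmulVec_b (hmn : m ≤ n) (A : Matrix (Fin m) (Fin n) ℝ) (y : Fin m → ℝ) (i : Fin m) :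
    (Aᵀ *ᵥ y) (bIdx hmn i) = ((Bmat hmn A)ᵀ *ᵥ y) i := rfl

lemma tmulVec_n (hmn : m ≤ n) (A : Matrix (Fin m) (Fin n) ℝ) (y : Fin m → ℝ) (j : Fin (n-m)) :
    (Aᵀ *ᵥ y) (nIdx hmn j) = ((Nmat hmn A)ᵀ *ᵥ y) j := rfl

/-- reduced cost of nonbasic column `j` -/
def red (hmn : m ≤ n) (A : Matrix (Fin m) (Fin n) ℝ) (c : Fin n → ℝ) (j : Fin (n-m)) : ℝ :=
  c (nIdx hmn j) - ∑ i, BN hmn A i j * c (bIdx hmn i)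

lemma NBT (hmn : m ≤ n) {A : Matrix (Fin m) (Fin n) ℝ}
    (v : Fin m → ℝ) (j : Fin (n-m)) :
    ((Nmat hmn A)ᵀ *ᵥ (((Bmat hmn A)ᵀ)⁻¹ *ᵥ v)) j = ∑ i, BN hmn A i j * v i := by
  rw [mulVec_mulVec]
  have h1 : (Nmat hmn A)ᵀ * ((Bmat hmn A)ᵀ)⁻¹ = (BN hmn A)ᵀ := by
    rw [BN, transpose_mul, transpose_nonsing_inv]
  rw [h1]
  rfl

lemma rows_indep_of_basis (hmn : m ≤ n) {A : Matrix (Fin m) (Fin n) ℝ}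
    (hB : IsUnit (Bmat hmn A).det) : LinearIndependent ℝ (fun i => A i) := by
  rw [Fintype.linearIndependent_iff]
  intro g hg i
  have h1 : ∀ k, ∑ l, g l * A l k = 0 := by
    intro k
    have := congrFun hg k
    simpa [Finset.sum_apply] using this
  have h2 : g ᵥ* Bmat hmn A = 0 := by
    funext i'
    have := h1 (bIdx hmn i')
    simpa [vecMul, dotProduct, Bmat] using this
  have h3 : g = 0 := by
    have := congrArg (fun v => v ᵥ* (Bmat hmn A)⁻¹) h2
    simpa [vecMul_vecMul, mul_nonsing_inv _ hB] using this
  simp [h3]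

lemma uob_of_pos (hmn : m ≤ n) {A : Matrix (Fin m) (Fin n) ℝ}
    (hB : IsUnit (Bmat hmn A).det) (b : Fin m → ℝ) (c : Fin n → ℝ)
    (hb : ∀ i, 0 < ((Bmat hmn A)⁻¹ *ᵥ b) i) (hc : ∀ j, 0 < red hmn A c j) :
    UniqueOptBasis hmn A b c := by
  have hBT : IsUnit (Bmat hmn A)ᵀ.det := by rwa [det_transpose]
  set x : Fin n → ℝ := fun i => if h : (i:ℕ) < m then ((Bmat hmn A)⁻¹ *ᵥ b) ⟨i, h⟩ else 0
    with hxdef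
  set y : Fin m → ℝ := ((Bmat hmn A)ᵀ)⁻¹ *ᵥ (rB hmn c) with hydef
  set s : Fin n → ℝ := c - Aᵀ *ᵥ y with hsdef
  have hxb : ∀ i : Fin m, x (bIdx hmn i) = ((Bmat hmn A)⁻¹ *ᵥ b) i := by
    intro i
    rw [hxdef]
    simp only []
    rw [dif_pos (bIdx_lt hmn i)]
    rfl
  have hxn : ∀ j : Fin (n-m), x (nIdx hmn j) = 0 := by
    intro j
    rw [hxdef]
    simp only []
    rw [dif_neg (by have := nIdx_ge hmn j; omega)]
  have hrBx : rB hmn x = (Bmat hmn A)⁻¹ *ᵥ b := funext hxb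
  have hrNx : rN hmn x = 0 := funext hxn
  have hsB : ∀ i, s (bIdx hmn i) = 0 := by
    intro i
    rw [hsdef]
    show c (bIdx hmn i) - (Aᵀ *ᵥ y) (bIdx hmn i) = 0
    rw [tmulVec_b, hydef, mulVec_mulVec, mul_nonsing_inv _ hBT, one_mulVec]
    simp [rB]
  have hsN : ∀ j, s (nIdx hmn j) = red hmn A c j := by
    intro j
    rw [hsdef]
    show c (nIdx hmn j) - (Aᵀ *ᵥ y) (nIdx hmn j) = red hmn A c j
    rw [tmulVec_n, hydef, NBT hmn, red]
    rfl
  have hfeas : A *ᵥ x = b := by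
    rw [mulVec_split hmn A x, hrBx, hrNx, mulVec_zero, add_zero, mulVec_mulVec,
      mul_nonsing_inv _ hB, one_mulVec]
  have hxnn : ∀ i, 0 ≤ x i := by
    intro i
    rcases idx_cases hmn i with ⟨i', rfl⟩ | ⟨j, rfl⟩
    · rw [hxb]; exact (hb i').le
    · rw [hxn]
  have hsnn : ∀ i, 0 ≤ s i := by
    intro i
    rcases idx_cases hmn i with ⟨i', rfl⟩ | ⟨j, rfl⟩
    · rw [hsB]
    · rw [hsN]; exact (hc j).le
  have hcdecomp : Aᵀ *ᵥ y + s = c := by rw [hsdef]; ring_nf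
  have hkey : ∀ x' : Fin n → ℝ, A *ᵥ x' = b → c ⬝ᵥ x' = b ⬝ᵥ y + s ⬝ᵥ x' := by
    intro x' hx'
    rw [← hcdecomp, add_dotProduct, tdot, hx', dotProduct_comm]
  have hsx : s ⬝ᵥ x = 0 := by
    rw [dot_split hmn, hrNx, dotProduct_zero, add_zero]
    have : rB hmn s = 0 := funext hsB
    rw [this, zero_dotProduct]
  have hcx : c ⬝ᵥ x = b ⬝ᵥ y := by rw [hkey x hfeas, hsx, add_zero]
  have hsxp : ∀ x' : Fin n → ℝ, (∀ i, 0 ≤ x' i) → 0 ≤ s ⬝ᵥ x' := by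
    intro x' hx'
    exact Finset.sum_nonneg fun i _ => mul_nonneg (hsnn i) (hx' i)
  refine ⟨x, y, s, ?_, ⟨hfeas, hxnn⟩, ?_, ?_, ⟨hcdecomp, hsnn⟩, ?_, ?_, hB, ?_, ?_⟩
  · exact rows_indep_of_basis hmn hB
  · -- primal_opt
    rintro x' ⟨hx'1, hx'2⟩
    have := hkey x' hx'1
    have h0 := hsxp x' hx'2
    rw [hcx, this]
    linarith
  · -- primal_uniq
    rintro x' ⟨hx'1, hx'2⟩ heq
    have h1 : s ⬝ᵥ x' = 0 := by
      have := hkey x' hx'1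
      rw [heq, hcx] at this
      linarith
    have h2 : ∀ j, x' (nIdx hmn j) = 0 := by
      have h3 : ∀ i ∈ Finset.univ, 0 ≤ s i * x' i :=
        fun i _ => mul_nonneg (hsnn i) (hx'2 i)
      have h4 := (Finset.sum_eq_zero_iff_of_nonneg h3).mp h1
      intro j
      have h5 := h4 (nIdx hmn j) (Finset.mem_univ _)
      rw [hsN] at h5
      have := (hc j).ne'
      rcases mul_eq_zero.mp h5 with h | h
      · exact absurd h this
      · exact h
    have hrNx' : rN hmn x' = 0 := funext h2
    have h6 : Bmat hmn A *ᵥ rB hmn x' = b := by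
      rw [mulVec_split hmn A x', hrNx', mulVec_zero, add_zero] at hx'1
      exact hx'1
    have h7 : rB hmn x' = (Bmat hmn A)⁻¹ *ᵥ b := by
      rw [← h6, mulVec_mulVec, nonsing_inv_mul _ hB, one_mulVec]
    funext i
    rcases idx_cases hmn i with ⟨i', rfl⟩ | ⟨j, rfl⟩
    · have := congrFun h7 i'
      rw [show rB hmn x' i' = x' (bIdx hmn i') from rfl] at this
      rw [this, hxb]
    · rw [h2 j, hxn]
  · -- dual_opt
    rintro y' s' ⟨hd1, hd2⟩
    have h1 : Aᵀ *ᵥ y' = c - s' := by rw [← hd1]; ring_nf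
    have h2 : b ⬝ᵥ y' = c ⬝ᵥ x - s' ⬝ᵥ x := by
      rw [dotProduct_comm b y', ← hfeas, ← tdot, h1, sub_dotProduct]
    have h3 : 0 ≤ s' ⬝ᵥ x := Finset.sum_nonneg fun i _ => mul_nonneg (hd2 i) (hxnn i)
    rw [h2, ← hcx]
    linarith
  · -- dual_uniq
    rintro y' s' ⟨hd1, hd2⟩ heq
    have h1 : Aᵀ *ᵥ y' = c - s' := by rw [← hd1]; ring_nf
    have h2 : b ⬝ᵥ y' = c ⬝ᵥ x - s' ⬝ᵥ x := by
      rw [dotProduct_comm b y', ← hfeas, ← tdot, h1, sub_dotProduct]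
    have h3 : s' ⬝ᵥ x = 0 := by
      rw [heq, ← hcx] at h2
      linarith
    have h4 : ∀ i : Fin m, s' (bIdx hmn i) = 0 := by
      have h5 : ∀ i ∈ Finset.univ, 0 ≤ s' i * x i :=
        fun i _ => mul_nonneg (hd2 i) (hxnn i)
      have h6 := (Finset.sum_eq_zero_iff_of_nonneg h5).mp h3
      intro i
      have h7 := h6 (bIdx hmn i) (Finset.mem_univ _)
      rw [hxb] at h7
      rcases mul_eq_zero.mp h7 with h | h
      · exact h
      · exact absurd h (hb i).ne'
    have h8 : (Bmat hmn A)ᵀ *ᵥ y' = rB hmn c := by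
      funext i
      have := congrFun hd1 (bIdx hmn i)
      rw [Pi.add_apply, tmulVec_b, h4 i, add_zero] at this
      exact this
    have h9 : y' = y := by
      rw [hydef, ← h8, mulVec_mulVec, nonsing_inv_mul _ hBT, one_mulVec]
    refine ⟨h9, ?_⟩
    rw [hsdef, ← hd1, h9]
    ring_nf
  · -- xstar_supp
    intro i
    constructor
    · intro hpos
      by_contra hge
      rcases idx_cases hmn i with ⟨i', rfl⟩ | ⟨j, rfl⟩
      · exact hge (bIdx_lt hmn i')
      · rw [hxn] at hpos; exact lt_irrefl 0 hpos
    · intro hlt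
      have : i = bIdx hmn ⟨i, hlt⟩ := Fin.ext rfl
      rw [this, hxb]
      exact hb _
  · -- sstar_supp
    intro i
    constructor
    · intro hpos
      by_contra hge
      push_neg at hge
      have : i = bIdx hmn ⟨i, hge⟩ := Fin.ext rfl
      rw [this, hsB] at hpos
      exact lt_irrefl 0 hpos
    · intro hle
      rcases idx_cases hmn i with ⟨i', rfl⟩ | ⟨j, rfl⟩
      · exact absurd (bIdx_lt hmn i') (by omega)
      · rw [hsN]; exact hc j

lemma uo_extract (hmn : m ≤ n) {A : Matrix (Fin m) (Fin n) ℝ} {b : Fin m → ℝ} {c : Fin n → ℝ}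
    {x : Fin n → ℝ} {y : Fin m → ℝ} {s : Fin n → ℝ} (h : UniqueOpt hmn A b c x y s) :
    (rB hmn x = (Bmat hmn A)⁻¹ *ᵥ b) ∧ (∀ j, x (nIdx hmn j) = 0) ∧
    (∀ i, s (bIdx hmn i) = 0) ∧ (∀ j, s (nIdx hmn j) = red hmn A c j) := by
  have hB := h.basis_isUnit
  have hBT : IsUnit (Bmat hmn A)ᵀ.det := by rwa [det_transpose]
  have hxn : ∀ j, x (nIdx hmn j) = 0 := by
    intro j
    have h1 : ¬ 0 < x (nIdx hmn j) := by
      rw [h.xstar_supp]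
      have := nIdx_ge hmn j; omega
    have h2 := h.primal_feas.2 (nIdx hmn j)
    by_contra hne
    exact h1 (lt_of_le_of_ne h2 (Ne.symm hne))
  have hsb : ∀ i, s (bIdx hmn i) = 0 := by
    intro i
    have h1 : ¬ 0 < s (bIdx hmn i) := by
      rw [h.sstar_supp]
      have := bIdx_lt hmn i; omega
    have h2 := h.dual_feas.2 (bIdx hmn i)
    by_contra hne
    exact h1 (lt_of_le_of_ne h2 (Ne.symm hne))
  have hrNx : rN hmn x = 0 := funext hxn
  have h6 : Bmat hmn A *ᵥ rB hmn x = b := by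
    have := h.primal_feas.1
    rw [mulVec_split hmn A x, hrNx, mulVec_zero, add_zero] at this
    exact this
  have h7 : rB hmn x = (Bmat hmn A)⁻¹ *ᵥ b := by
    rw [← h6, mulVec_mulVec, nonsing_inv_mul _ hB, one_mulVec]
  have h8 : (Bmat hmn A)ᵀ *ᵥ y = rB hmn c := by
    funext i
    have := congrFun h.dual_feas.1 (bIdx hmn i)
    rw [Pi.add_apply, tmulVec_b, hsb i, add_zero] at this
    exact this
  have h9 : y = ((Bmat hmn A)ᵀ)⁻¹ *ᵥ rB hmn c := by
    rw [← h8, mulVec_mulVec, nonsing_inv_mul _ hBT, one_mulVec]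
  refine ⟨h7, hxn, hsb, ?_⟩
  intro j
  have h10 := congrFun h.dual_feas.1 (nIdx hmn j)
  rw [Pi.add_apply, tmulVec_n] at h10
  have h11 : ((Nmat hmn A)ᵀ *ᵥ y) j = ∑ i, BN hmn A i j * c (bIdx hmn i) := by
    rw [h9, NBT hmn]
    rfl
  rw [h11] at h10
  rw [red]
  linarith

lemma uob_iff (hmn : m ≤ n) {A : Matrix (Fin m) (Fin n) ℝ}
    (hB : IsUnit (Bmat hmn A).det) (b : Fin m → ℝ) (c : Fin n → ℝ) :
    UniqueOptBasis hmn A b c ↔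
      (∀ i, 0 < ((Bmat hmn A)⁻¹ *ᵥ b) i) ∧ (∀ j, 0 < red hmn A c j) := by
  constructor
  · rintro ⟨x, y, s, h⟩
    obtain ⟨h7, hxn, hsb, hsn⟩ := uo_extract hmn h
    constructor
    · intro i
      rw [← congrFun h7 i]
      have : 0 < x (bIdx hmn i) := (h.xstar_supp _).mpr (bIdx_lt hmn i)
      exact this
    · intro j
      rw [← hsn j]
      exact (h.sstar_supp _).mpr (nIdx_ge hmn j)
  · rintro ⟨hb, hc⟩
    exact uob_of_pos hmn hB b c hb hc

/-! ### Cauchy-Schwarz tools -/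

lemma dot_le_enorm (k : ℕ) (dc v : Fin k → ℝ) :
    -(∑ i, dc i * v i) ≤ enorm dc * Real.sqrt (∑ i, v i ^ 2) := by
  have h := Real.sum_mul_le_sqrt_mul_sqrt Finset.univ dc (fun i => -(v i))
  have h2 : ∑ i, dc i * (-(v i)) = -(∑ i, dc i * v i) := by
    rw [← Finset.sum_neg_distrib]
    exact Finset.sum_congr rfl fun i _ => by ring
  have h3 : ∑ i, (-(v i)) ^ 2 = ∑ i, v i ^ 2 :=
    Finset.sum_congr rfl fun i _ => by ring
  rw [h2, h3] at h
  exact h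

/-! ### the perturbation vector for `zetaP` -/

def pVec (hmn : m ≤ n) (A : Matrix (Fin m) (Fin n) ℝ) (j : Fin (n-m)) : Fin n → ℝ :=
  fun k => if h : (k:ℕ) < m then -(BN hmn A ⟨k, h⟩ j) else if k = nIdx hmn j then 1 else 0

lemma pVec_b (hmn : m ≤ n) (A : Matrix (Fin m) (Fin n) ℝ) (j : Fin (n-m)) (i : Fin m) :
    pVec hmn A j (bIdx hmn i) = -(BN hmn A i j) := by
  rw [pVec, dif_pos (bIdx_lt hmn i)]
  rfl

lemma pVec_n (hmn : m ≤ n) (A : Matrix (Fin m) (Fin n) ℝ) (j j' : Fin (n-m)) :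
    pVec hmn A j (nIdx hmn j') = if j' = j then 1 else 0 := by
  rw [pVec, dif_neg (by have := nIdx_ge hmn j'; omega)]
  by_cases h : j' = j
  · rw [if_pos (by rw [h]), if_pos h]
  · rw [if_neg (fun hc => h (nIdx_inj hmn hc)), if_neg h]

lemma pVec_sq (hmn : m ≤ n) (A : Matrix (Fin m) (Fin n) ℝ) (j : Fin (n-m)) :
    ∑ k, (pVec hmn A j k) ^ 2 = (∑ i, (BN hmn A i j) ^ 2) + 1 := by
  rw [sum_split hmn]
  congr 1
  · exact Finset.sum_congr rfl fun i _ => by rw [pVec_b]; ring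
  · have h1 : ∀ j', (pVec hmn A j (nIdx hmn j')) ^ 2 = if j' = j then 1 else 0 := by
      intro j'
      rw [pVec_n]
      by_cases h : j' = j <;> simp [h]
    rw [Finset.sum_congr rfl fun j' _ => h1 j']
    simp

lemma red_add (hmn : m ≤ n) (A : Matrix (Fin m) (Fin n) ℝ) (c dc : Fin n → ℝ) (j : Fin (n-m)) :
    red hmn A (c + dc) j = red hmn A c j + ∑ k, dc k * pVec hmn A j k := by
  have hs : ∑ k, dc k * pVec hmn A j k
      = (∑ i, dc (bIdx hmn i) * (-(BN hmn A i j)))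
        + ∑ j', dc (nIdx hmn j') * (if j' = j then 1 else 0) := by
    rw [sum_split hmn]
    congr 1
    · exact Finset.sum_congr rfl fun i _ => by rw [pVec_b]
    · exact Finset.sum_congr rfl fun j' _ => by rw [pVec_n]
  have h2 : ∑ j', dc (nIdx hmn j') * (if j' = j then 1 else 0) = dc (nIdx hmn j) := by
    simp [mul_ite]
  rw [hs, h2, red, red]
  simp only [Pi.add_apply]
  rw [show (∑ i, BN hmn A i j * (c (bIdx hmn i) + dc (bIdx hmn i)))
      = (∑ i, BN hmn A i j * c (bIdx hmn i)) + ∑ i, BN hmn A i j * dc (bIdx hmn i) by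
    rw [← Finset.sum_add_distrib]; exact Finset.sum_congr rfl fun i _ => by ring]
  rw [show (∑ i, dc (bIdx hmn i) * (-(BN hmn A i j))) = -(∑ i, BN hmn A i j * dc (bIdx hmn i)) by
    rw [← Finset.sum_neg_distrib]; exact Finset.sum_congr rfl fun i _ => by ring]
  ring

lemma zetaP_eq (hmn : m ≤ n) {A : Matrix (Fin m) (Fin n) ℝ} {b : Fin m → ℝ} {c : Fin n → ℝ}
    {xstar : Fin n → ℝ} {ystar : Fin m → ℝ} {sstar : Fin n → ℝ}
    (h : UniqueOpt hmn A b c xstar ystar sstar) :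
    zetaP hmn A b c =
      ⨅ j : Fin (n - m), sstar (nIdx hmn j) / Real.sqrt ((∑ i, (BN hmn A i j) ^ 2) + 1) := by
  have hB := h.basis_isUnit
  obtain ⟨h7, hxn, hsb, hsn⟩ := uo_extract hmn h
  have hbpos : ∀ i, 0 < ((Bmat hmn A)⁻¹ *ᵥ b) i := fun i => by
    rw [← congrFun h7 i]
    exact (h.xstar_supp _).mpr (bIdx_lt hmn i)
  have hspos : ∀ j, 0 < sstar (nIdx hmn j) := fun j => (h.sstar_supp _).mpr (nIdx_ge hmn j)
  set f : Fin (n-m) → ℝ :=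
    fun j => sstar (nIdx hmn j) / Real.sqrt ((∑ i, (BN hmn A i j) ^ 2) + 1) with hf
  set S : Set ℝ := {t | ∃ dc : Fin n → ℝ, t = enorm dc ∧ ¬ UniqueOptBasis hmn A b (c + dc)}
    with hSdef
  have hQpos : ∀ j : Fin (n-m), (0:ℝ) < (∑ i, (BN hmn A i j) ^ 2) + 1 := by
    intro j; positivity
  have hWpos : ∀ j : Fin (n-m), (0:ℝ) < Real.sqrt ((∑ i, (BN hmn A i j) ^ 2) + 1) :=
    fun j => Real.sqrt_pos.mpr (hQpos j)
  rcases Nat.eq_zero_or_pos (n - m) with hz | hpos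
  · haveI : IsEmpty (Fin (n-m)) := by rw [hz]; infer_instance
    have hS : S = ∅ := by
      ext t
      simp only [hSdef, Set.mem_setOf_eq, Set.mem_empty_iff_false, iff_false, not_exists]
      intro dc
      rintro ⟨-, hno⟩
      exact hno (uob_of_pos hmn hB b (c + dc) hbpos (fun j => isEmptyElim j))
    rw [zetaP, ← hSdef, hS, Real.sInf_empty, Real.iInf_of_isEmpty]
  · haveI : Nonempty (Fin (n-m)) := ⟨⟨0, hpos⟩⟩
    obtain ⟨j0, -, hj0⟩ := Finset.exists_min_image Finset.univ f ⟨Classical.arbitrary _,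
      Finset.mem_univ _⟩
    -- lower bound
    have lb : ∀ t ∈ S, f j0 ≤ t := by
      rintro t ⟨dc, rfl, hno⟩
      rw [uob_iff hmn hB] at hno
      have hex : ∃ j, red hmn A (c + dc) j ≤ 0 := by
        by_contra hcon
        push_neg at hcon
        exact hno ⟨hbpos, hcon⟩
      obtain ⟨j, hj⟩ := hex
      rw [red_add, ← hsn j] at hj
      have h1 : sstar (nIdx hmn j) ≤ -(∑ k, dc k * pVec hmn A j k) := by linarith
      have h2 := dot_le_enorm n dc (pVec hmn A j)
      rw [pVec_sq] at h2
      have h3 : sstar (nIdx hmn j)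
          ≤ enorm dc * Real.sqrt ((∑ i, (BN hmn A i j) ^ 2) + 1) := le_trans h1 h2
      have h4 : f j ≤ enorm dc := by
        rw [hf]
        rw [div_le_iff₀ (hWpos j)]
        exact h3
      exact le_trans (hj0 j (Finset.mem_univ j)) h4
    -- membership
    set Q : ℝ := (∑ i, (BN hmn A i j0) ^ 2) + 1 with hQ
    set W : ℝ := Real.sqrt Q with hW
    have hWp : 0 < W := hWpos j0
    have hW2 : W ^ 2 = Q := Real.sq_sqrt (hQpos j0).le
    set t0 : ℝ := sstar (nIdx hmn j0) / Q with ht0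
    have ht0p : 0 < t0 := div_pos (hspos j0) (hQpos j0)
    set dc0 : Fin n → ℝ := fun k => -t0 * pVec hmn A j0 k with hdc0
    have hdot : ∑ k, dc0 k * pVec hmn A j0 k = -t0 * Q := by
      rw [show ∑ k, dc0 k * pVec hmn A j0 k = -t0 * ∑ k, (pVec hmn A j0 k) ^ 2 by
        rw [Finset.mul_sum]; exact Finset.sum_congr rfl fun k _ => by rw [hdc0]; ring]
      rw [pVec_sq, ← hQ]
    have hred0 : red hmn A (c + dc0) j0 = 0 := by
      rw [red_add, ← hsn j0, hdot, ht0]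
      field_simp
      rw [div_self (show Q ≠ 0 from (hQpos j0).ne')]; ring
    have hnob : ¬ UniqueOptBasis hmn A b (c + dc0) := by
      rw [uob_iff hmn hB]
      rintro ⟨-, hcpos⟩
      have := hcpos j0
      rw [hred0] at this
      exact lt_irrefl 0 this
    have henorm : enorm dc0 = f j0 := by
      have h1 : ∑ k, (dc0 k) ^ 2 = t0 ^ 2 * Q := by
        rw [show ∑ k, (dc0 k) ^ 2 = t0 ^ 2 * ∑ k, (pVec hmn A j0 k) ^ 2 by
          rw [Finset.mul_sum]; exact Finset.sum_congr rfl fun k _ => by rw [hdc0]; ring]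
        rw [pVec_sq, ← hQ]
      rw [enorm, h1, Real.sqrt_mul (sq_nonneg t0), Real.sqrt_sq ht0p.le, ← hW]
      rw [hf, ht0]
      rw [← hW2]
      field_simp
      ring
    have hmem : f j0 ∈ S := ⟨dc0, henorm.symm, hnob⟩
    have hSne : S.Nonempty := ⟨f j0, hmem⟩
    have hbdd : BddBelow S := ⟨f j0, lb⟩
    have h1 : sInf S = f j0 := le_antisymm (csInf_le hbdd hmem) (le_csInf hSne lb)
    have h2 : (⨅ j, f j) = f j0 :=
      le_antisymm (ciInf_le (Set.Finite.bddBelow (Set.finite_range f)) j0)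
        (le_ciInf fun j => hj0 j (Finset.mem_univ j))
    rw [zetaP, ← hSdef, h1, ← h2]

lemma dot_self_eq_sum_sq {k : ℕ} (w : Fin k → ℝ) : w ⬝ᵥ w = ∑ i, w i ^ 2 :=
  Finset.sum_congr rfl fun i _ => (pow_two _).symm

lemma AAT_isUnit (hmn : m ≤ n) {A : Matrix (Fin m) (Fin n) ℝ}
    (hB : IsUnit (Bmat hmn A).det) : IsUnit (A * Aᵀ).det := by
  have hBT : IsUnit (Bmat hmn A)ᵀ.det := by rwa [det_transpose]
  rw [isUnit_iff_ne_zero]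
  intro hdet
  obtain ⟨v, hv, hv0⟩ := (Matrix.exists_mulVec_eq_zero_iff).mpr hdet
  have h2 : (Aᵀ *ᵥ v) ⬝ᵥ (Aᵀ *ᵥ v) = 0 := by
    rw [tdot, mulVec_mulVec, hv0, dotProduct_zero]
  have h1 : Aᵀ *ᵥ v = 0 := dotProduct_self_eq_zero.mp h2
  have h3 : (Bmat hmn A)ᵀ *ᵥ v = 0 := by
    funext i
    have := congrFun h1 (bIdx hmn i)
    rw [tmulVec_b] at this
    exact this
  apply hv
  have h4 := congrArg (fun w => ((Bmat hmn A)ᵀ)⁻¹ *ᵥ w) h3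
  simpa [mulVec_mulVec, nonsing_inv_mul _ hBT, one_mulVec, mulVec_zero] using h4

lemma zetaD_eq (hmn : m ≤ n) {A : Matrix (Fin m) (Fin n) ℝ} {b : Fin m → ℝ} {c : Fin n → ℝ}
    {xstar : Fin n → ℝ} {ystar : Fin m → ℝ} {sstar : Fin n → ℝ}
    (h : UniqueOpt hmn A b c xstar ystar sstar) :
    zetaD hmn A b c =
      ⨅ i : Fin m, xstar (bIdx hmn i) / Real.sqrt ((∑ j, (BN hmn A i j) ^ 2) + 1) := by
  have hB := h.basis_isUnit
  have hBT : IsUnit (Bmat hmn A)ᵀ.det := by rwa [det_transpose]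
  have hAAT : IsUnit (A * Aᵀ).det := AAT_isUnit hmn hB
  obtain ⟨h7, hxn, hsb, hsn⟩ := uo_extract hmn h
  have hxb : ∀ i, ((Bmat hmn A)⁻¹ *ᵥ b) i = xstar (bIdx hmn i) := fun i => (congrFun h7 i).symm
  have hxpos : ∀ i, 0 < xstar (bIdx hmn i) := fun i => (h.xstar_supp _).mpr (bIdx_lt hmn i)
  have hcpos : ∀ j, 0 < red hmn A c j := fun j => by
    rw [← hsn j]; exact (h.sstar_supp _).mpr (nIdx_ge hmn j)
  set f : Fin m → ℝ :=
    fun i => xstar (bIdx hmn i) / Real.sqrt ((∑ j, (BN hmn A i j) ^ 2) + 1) with hf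
  set S : Set ℝ := {t | ∃ db : Fin m → ℝ, t = Real.sqrt (db ⬝ᵥ ((A * Aᵀ)⁻¹ *ᵥ db)) ∧
    ¬ UniqueOptBasis hmn A (b + db) c} with hSdef
  have hQpos : ∀ i : Fin m, (0:ℝ) < (∑ j, (BN hmn A i j) ^ 2) + 1 := by
    intro i; positivity
  have hWpos : ∀ i : Fin m, (0:ℝ) < Real.sqrt ((∑ j, (BN hmn A i j) ^ 2) + 1) :=
    fun i => Real.sqrt_pos.mpr (hQpos i)
  -- the row data
  set u : Fin m → Fin m → ℝ := fun i k => (Bmat hmn A)⁻¹ i k with hu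
  set g : Fin m → Fin n → ℝ := fun i => Aᵀ *ᵥ (u i) with hg
  have hub : ∀ (w : Fin m → ℝ) (i), ((Bmat hmn A)⁻¹ *ᵥ w) i = u i ⬝ᵥ w := fun w i => rfl
  have hgb : ∀ i i', g i (bIdx hmn i') = if i = i' then (1:ℝ) else 0 := by
    intro i i'
    have e1 : ((Bmat hmn A)ᵀ *ᵥ u i) i' = ((Bmat hmn A)⁻¹ * Bmat hmn A) i i' := by
      rw [mul_apply]
      simp only [mulVec, dotProduct, transpose_apply, hu]
      exact Finset.sum_congr rfl fun k _ => mul_comm _ _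
    show (Aᵀ *ᵥ u i) (bIdx hmn i') = _
    rw [tmulVec_b, e1, nonsing_inv_mul _ hB, one_apply]
  have hgn : ∀ i j, g i (nIdx hmn j) = BN hmn A i j := by
    intro i j
    show (Aᵀ *ᵥ u i) (nIdx hmn j) = _
    rw [tmulVec_n, BN, mul_apply]
    simp only [mulVec, dotProduct, transpose_apply, hu, Nmat]
    exact Finset.sum_congr rfl fun k _ => mul_comm _ _
  have hgsq : ∀ i, ∑ k, (g i k) ^ 2 = (∑ j, (BN hmn A i j) ^ 2) + 1 := by
    intro i
    have hbs : ∑ i', (g i (bIdx hmn i')) ^ 2 = 1 := by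
      have e2 : ∀ i', (g i (bIdx hmn i')) ^ 2 = if i = i' then (1:ℝ) else 0 := by
        intro i'
        rw [hgb]
        by_cases hc : i = i' <;> simp [hc]
      rw [Finset.sum_congr rfl fun i' _ => e2 i']
      simp
    have hns : ∑ j, (g i (nIdx hmn j)) ^ 2 = ∑ j, (BN hmn A i j) ^ 2 :=
      Finset.sum_congr rfl fun j _ => by rw [hgn]
    rw [sum_split hmn (fun k => (g i k) ^ 2), hbs, hns]
    ring
  have hMc : ∀ z : Fin m → ℝ, (A * Aᵀ)⁻¹ *ᵥ ((A * Aᵀ) *ᵥ z) = z := by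
    intro z
    rw [mulVec_mulVec, nonsing_inv_mul _ hAAT, one_mulVec]
  have hAAz : ∀ z : Fin m → ℝ, ((A * Aᵀ) *ᵥ z) ⬝ᵥ z = (Aᵀ *ᵥ z) ⬝ᵥ (Aᵀ *ᵥ z) := by
    intro z
    rw [← mulVec_mulVec, dotProduct_comm, ← tdot]
  have hug : ∀ (i) (z : Fin m → ℝ), u i ⬝ᵥ ((A * Aᵀ) *ᵥ z) = (Aᵀ *ᵥ z) ⬝ᵥ g i := by
    intro i z
    rw [← mulVec_mulVec, ← tdot A (u i), dotProduct_comm]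
  rcases Nat.eq_zero_or_pos m with hz | hposm
  · haveI : IsEmpty (Fin m) := by rw [hz]; infer_instance
    have hS : S = ∅ := by
      ext t
      simp only [hSdef, Set.mem_setOf_eq, Set.mem_empty_iff_false, iff_false, not_exists]
      intro db
      rintro ⟨-, hno⟩
      exact hno (uob_of_pos hmn hB (b + db) c (fun i => isEmptyElim i) hcpos)
    rw [zetaD, ← hSdef, hS, Real.sInf_empty, Real.iInf_of_isEmpty]
  · haveI : Nonempty (Fin m) := ⟨⟨0, hposm⟩⟩
    obtain ⟨i0, -, hi0⟩ := Finset.exists_min_image Finset.univ f ⟨Classical.arbitrary _,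
      Finset.mem_univ _⟩
    -- lower bound
    have lb : ∀ t ∈ S, f i0 ≤ t := by
      rintro t ⟨db, rfl, hno⟩
      obtain ⟨z, rfl⟩ : ∃ z, db = (A * Aᵀ) *ᵥ z := ⟨(A * Aᵀ)⁻¹ *ᵥ db, by
        rw [mulVec_mulVec, mul_nonsing_inv _ hAAT, one_mulVec]⟩
      rw [uob_iff hmn hB] at hno
      have hex : ∃ i, ((Bmat hmn A)⁻¹ *ᵥ (b + (A * Aᵀ) *ᵥ z)) i ≤ 0 := by
        by_contra hcon
        push_neg at hcon
        exact hno ⟨hcon, hcpos⟩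
      obtain ⟨i, hi⟩ := hex
      rw [mulVec_add] at hi
      have hi' : xstar (bIdx hmn i) + u i ⬝ᵥ ((A * Aᵀ) *ᵥ z) ≤ 0 := by
        rw [← hub, ← hxb i]
        exact hi
      rw [hug i z] at hi'
      have h1 : xstar (bIdx hmn i) ≤ -(∑ k, (Aᵀ *ᵥ z) k * g i k) := by
        rw [show (∑ k, (Aᵀ *ᵥ z) k * g i k) = (Aᵀ *ᵥ z) ⬝ᵥ g i from rfl]
        linarith
      have h2 := dot_le_enorm n (Aᵀ *ᵥ z) (g i)
      rw [hgsq i] at h2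
      have h3 : xstar (bIdx hmn i)
          ≤ enorm (Aᵀ *ᵥ z) * Real.sqrt ((∑ j, (BN hmn A i j) ^ 2) + 1) := le_trans h1 h2
      have h4 : Real.sqrt (((A * Aᵀ) *ᵥ z) ⬝ᵥ ((A * Aᵀ)⁻¹ *ᵥ ((A * Aᵀ) *ᵥ z)))
          = enorm (Aᵀ *ᵥ z) := by
        rw [hMc z, hAAz z, dot_self_eq_sum_sq, enorm]
      rw [h4]
      have h5 : f i ≤ enorm (Aᵀ *ᵥ z) := by
        rw [hf, div_le_iff₀ (hWpos i)]
        exact h3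
      exact le_trans (hi0 i (Finset.mem_univ i)) h5
    -- membership
    set Q : ℝ := (∑ j, (BN hmn A i0 j) ^ 2) + 1 with hQ
    set W : ℝ := Real.sqrt Q with hW
    have hWp : 0 < W := hWpos i0
    have hW2 : W ^ 2 = Q := Real.sq_sqrt (hQpos i0).le
    set t0 : ℝ := xstar (bIdx hmn i0) / Q with ht0
    have ht0p : 0 < t0 := div_pos (hxpos i0) (hQpos i0)
    set db0 : Fin m → ℝ := (-t0) • ((A * Aᵀ) *ᵥ u i0) with hdb0
    have hgg : (Aᵀ *ᵥ u i0) ⬝ᵥ (Aᵀ *ᵥ u i0) = Q := by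
      show g i0 ⬝ᵥ g i0 = Q
      rw [dot_self_eq_sum_sq, hgsq i0, ← hQ]
    have huAAu : u i0 ⬝ᵥ ((A * Aᵀ) *ᵥ u i0) = Q := by
      rw [hug i0 (u i0)]
      exact hgg
    have hudb0 : u i0 ⬝ᵥ db0 = -(xstar (bIdx hmn i0)) := by
      rw [hdb0, dotProduct_smul, huAAu, ht0, smul_eq_mul]
      field_simp
      rw [mul_div_assoc, div_self (show Q ≠ 0 from (hQpos i0).ne'), mul_one]
    have hMdb0 : (A * Aᵀ)⁻¹ *ᵥ db0 = (-t0) • u i0 := by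
      rw [hdb0, mulVec_smul, hMc]
    have hval : db0 ⬝ᵥ ((A * Aᵀ)⁻¹ *ᵥ db0) = t0 ^ 2 * Q := by
      rw [hMdb0, dotProduct_smul, hdb0, smul_dotProduct, smul_eq_mul, smul_eq_mul,
        hAAz (u i0), hgg]
      ring
    have hsqrtval : Real.sqrt (db0 ⬝ᵥ ((A * Aᵀ)⁻¹ *ᵥ db0)) = f i0 := by
      rw [hval, Real.sqrt_mul (sq_nonneg t0), Real.sqrt_sq ht0p.le, ← hW, hf, ht0, ← hW2]
      field_simp
      ring
    have hnob : ¬ UniqueOptBasis hmn A (b + db0) c := by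
      rw [uob_iff hmn hB]
      rintro ⟨hbp, -⟩
      have := hbp i0
      rw [mulVec_add, Pi.add_apply, hub db0 i0, hudb0, hxb i0] at this
      simp at this
    have hmem : f i0 ∈ S := ⟨db0, hsqrtval.symm, hnob⟩
    have hSne : S.Nonempty := ⟨f i0, hmem⟩
    have hbdd : BddBelow S := ⟨f i0, lb⟩
    have h1 : sInf S = f i0 := le_antisymm (csInf_le hbdd hmem) (le_csInf hSne lb)
    have h2 : (⨅ i, f i) = f i0 :=
      le_antisymm (ciInf_le (Set.Finite.bddBelow (Set.finite_range f)) i0)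
        (le_ciInf fun i => hi0 i (Finset.mem_univ i))
    rw [zetaD, ← hSdef, h1, ← h2]

/-- Lemma 13 of the paper. Under the unique-optimum assumption, the
stability measures have the closed forms
`ζ_p = min_j s*_{m+j}/√(‖(B⁻¹N)_{·,j}‖²+1)` and `ζ_d = min_i x*_i/√(‖(B⁻¹N)_{i,·}‖²+1)`. -/
theorem zetaP_zetaD_closed_form (m n : ℕ) (hmn : m ≤ n)
    (A : Matrix (Fin m) (Fin n) ℝ) (b : Fin m → ℝ) (c : Fin n → ℝ)
    (xstar : Fin n → ℝ) (ystar : Fin m → ℝ) (sstar : Fin n → ℝ)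
    (h : UniqueOpt hmn A b c xstar ystar sstar) :
    zetaP hmn A b c =
      (⨅ j : Fin (n - m), sstar (nIdx hmn j) / Real.sqrt ((∑ i, (BN hmn A i j) ^ 2) + 1)) ∧
    zetaD hmn A b c =
      (⨅ i : Fin m, xstar (bIdx hmn i) / Real.sqrt ((∑ j, (BN hmn A i j) ^ 2) + 1)) :=
  ⟨zetaP_eq hmn h, zetaD_eq hmn h⟩

end LPPaper
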